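/- Let E be a preorder with an automorphism φ and an element e with φ(e) ≠ e. Form E' = E ∪ {a} with a a new element, extending the preorder by a ≤ e and e ≤ a. Then the map φ' extending φ with φ'(a) = φ(e) is an equivalence from the preorder category of E' to itself that is not naturally isomorphic to any isomorphism of categories, because the isomorphism class of e has two elements {e, a} while the isomorphism class of φ(e) is a singleton. -/

import Mathlib

open CategoryTheory

/-- The preorder on `E' = E ∪ {a}` (with `a = none`), extending the order on `E`
by `a ≤ e` and `e ≤ a`. -/
def extLE {E : Type*} [PartialOrder E] (e : E) : Option E → Option E → Prop
  | some x, some y => x ≤ y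
  | some x, none => x ≤ e
  | none, some y => e ≤ y
  | none, none => True

def extPreorder {E : Type*} [PartialOrder E] (e : E) : Preorder (Option E) where
  le := extLE e
  lt x y := extLE e x y ∧ ¬ extLE e y x
  lt_iff_le_not_ge _ _ := Iff.rfl
  le_refl x := by cases x <;> simp [extLE]
  le_trans x y z hxy hyz := by
    cases x <;> cases y <;> cases z <;>
      simp only [extLE] at * <;> first
        | trivial
        | exact hxy
        | exact hyz
        | exact le_trans hxy hyz

/-- The map `φ'` extending `φ` with `φ'(a) = φ(e)`. -/
def extMap {E : Type*} (φ : E → E) (e : E) : Option E → Option E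
  | some x => some (φ x)
  | none => some (φ e)

theorem stmt_8 {E : Type*} [PartialOrder E] (φ : E ≃o E) (e : E) (he : φ e ≠ e) :
    letI : Preorder (Option E) := extPreorder e
    ∃ F : Option E ⥤ Option E,
      (∀ x : Option E, F.obj x = extMap φ e x) ∧
      F.IsEquivalence ∧
      ¬ ∃ ψ : Option E ⥤ Option E,
          (∃ ψ' : Option E ⥤ Option E,
            ψ ⋙ ψ' = 𝟭 (Option E) ∧ ψ' ⋙ ψ = 𝟭 (Option E)) ∧
          Nonempty (F ≅ ψ) := by
  letI : Preorder (Option E) := extPreorder e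
  have hmono : Monotone (extMap φ e) := by
    intro x y h
    cases x <;> cases y <;>
      · show extLE e _ _
        have h' : extLE e _ _ := h
        simpa [extMap, extLE] using φ.monotone (by simpa [extLE] using h')
  refine ⟨hmono.functor, fun x => rfl, ?_, ?_⟩
  · have full : (hmono.functor).Full := by
      constructor
      intro x y f
      refine ⟨⟨⟨?_⟩⟩, rfl⟩
      have h : extLE e (extMap φ e x) (extMap φ e y) := f.down.down
      cases x <;> cases y <;>
        · show extLE e _ _
          first
          | exact trivial
          | exact φ.le_iff_le.mp (by simpa [extMap, extLE] using h)
    have faithful : (hmono.functor).Faithful := by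
      constructor
      intro _ _ f g _
      apply Subsingleton.elim
    have ess : (hmono.functor).EssSurj := by
      constructor
      intro z
      cases z with
      | none =>
        refine ⟨some (φ.symm e), ⟨⟨⟨?_⟩⟩, ⟨⟨?_⟩⟩, ?_, ?_⟩⟩
        · show extLE e (some (φ (φ.symm e))) none
          simp [extLE]
        · show extLE e none (some (φ (φ.symm e)))
          simp [extLE]
        all_goals apply Subsingleton.elim
      | some y =>
        exact ⟨some (φ.symm y), ⟨eqToIso (by simp [Monotone.functor, extMap])⟩⟩
    exact { full := full, faithful := faithful, essSurj := ess }
  · rintro ⟨ψ, ⟨ψ', h1, h2⟩, ⟨η⟩⟩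
    -- ψ is injective on objects
    have hinj : Function.Injective ψ.obj := by
      intro x y h
      have := congrArg (fun (G : Option E ⥤ Option E) => G.obj x) h1
      have hy := congrArg (fun (G : Option E ⥤ Option E) => G.obj y) h1
      simp only [Functor.comp_obj, Functor.id_obj] at this hy
      rw [← this, ← hy, h]
    -- iso class of some (φ e) is a singleton
    have hsing : ∀ z : Option E, (z ≅ (some (φ e) : Option E)) → z = some (φ e) := by
      intro z i
      have h1 : extLE e z (some (φ e)) := i.hom.down.down
      have h2 : extLE e (some (φ e)) z := i.inv.down.down
      cases z with
      | none =>
        exact absurd (le_antisymm (by simpa [extLE] using h2) (by simpa [extLE] using h1)) he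
      | some w =>
        simp only [extLE] at h1 h2
        exact congrArg some (le_antisymm h1 h2)
    have i1 : ψ.obj none ≅ (some (φ e) : Option E) := (η.app none).symm
    have i2 : ψ.obj (some e) ≅ (some (φ e) : Option E) := by
      have := (η.app (some e)).symm
      simpa [Monotone.functor, extMap] using this
    have := hinj ((hsing _ i1).trans (hsing _ i2).symm)
    exact nomatch this
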